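/- Assume G is connected, n ≥ 3, and (G;C) is twin free. Let π^x·x + π^y·y ≤ π₀ be a facet-defining inequality for P, let v ∈ V and j ∈ {1,…,m}, and suppose the facet F = {(x,y) ∈ P : π^x·x + π^y·y = π₀} is different from the face {(x,y) ∈ P : y_{v,j} = 0}. Then π^y_{v,j} ≥ 0. -/

import Mathlib

open Finset

namespace LegalSeq

variable {V : Type*}

/-- The generalized neighborhood `N⟨v⟩`: the closed neighborhood of `v` if `v ∈ C`,
the open neighborhood otherwise. -/
noncomputable def gN [Fintype V] (G : SimpleGraph V) (C : Set V) (v : V) : Finset V := by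
  classical
  exact (Set.toFinite (if v ∈ C then insert v (G.neighborSet v) else G.neighborSet v)).toFinset

/-- The ambient space `ℝ^{V×{1,…,m}} × ℝ^{V×{1,…,m}}` of the polytope of legal sequences. -/
abbrev Pt (V : Type*) (m : ℕ) := (V × Fin m → ℝ) × (V × Fin m → ℝ)

/-- Feasible 0/1 pairs `(x, y)` of the formulation `F₁` (constraints (1)-(5)). -/
def Feasible [Fintype V] (G : SimpleGraph V) (C : Set V) (m : ℕ) : Set (Pt V m) :=
  { p | (∀ q, p.1 q = 0 ∨ p.1 q = 1) ∧ (∀ q, p.2 q = 0 ∨ p.2 q = 1) ∧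
    (∀ i : Fin m, ∑ v : V, p.2 (v, i) ≤ 1) ∧
    (∀ v : V, ∑ i : Fin m, p.2 (v, i) ≤ 1) ∧
    (∀ (v : V) (i : Fin m) (h : i.1 + 1 < m),
        p.2 (v, ⟨i.1 + 1, h⟩) ≤ ∑ u ∈ gN G C v, (p.1 (u, i) - p.1 (u, ⟨i.1 + 1, h⟩))) ∧
    (∀ (u : V) (i : Fin m), p.1 (u, i) + ∑ v ∈ gN G C u, p.2 (v, i) ≤ 1) ∧
    (∀ (u : V) (i : Fin m) (h : i.1 + 1 < m), p.1 (u, ⟨i.1 + 1, h⟩) ≤ p.1 (u, i)) }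

/-- The polytope of legal sequences: the convex hull of the feasible 0/1 pairs. -/
noncomputable def poly [Fintype V] (G : SimpleGraph V) (C : Set V) (m : ℕ) : Set (Pt V m) :=
  convexHull ℝ (Feasible G C m)

/-- `δ(G;C)`, the minimum cardinality of a generalized neighborhood. -/
noncomputable def gdelta [Fintype V] (G : SimpleGraph V) (C : Set V) : ℕ :=
  sInf (Set.range fun v : V => (gN G C v).card)

/-- The instance `(G;C)` is twin free if distinct vertices have distinct
generalized neighborhoods. -/
def TwinFree [Fintype V] (G : SimpleGraph V) (C : Set V) : Prop :=
  ∀ u v : V, u ≠ v → gN G C u ≠ gN G C v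

/-- The inequality `f p ≤ a` is valid for the polytope and the face it defines has affine
dimension `2nm - 1`, i.e. it is facet-defining. -/
def IsFacet [Fintype V] (G : SimpleGraph V) (C : Set V) (m : ℕ)
    (f : Pt V m → ℝ) (a : ℝ) : Prop :=
  (∀ p ∈ poly G C m, f p ≤ a) ∧
  Module.finrank ℝ ((affineSpan ℝ {p ∈ poly G C m | f p = a}).direction) =
    2 * Fintype.card V * m - 1

/-- The linear functional `p ↦ π^x·x + π^y·y`. -/
noncomputable def lfun [Fintype V] (m : ℕ) (πx πy : V × Fin m → ℝ) : Pt V m →ₗ[ℝ] ℝ where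
  toFun p := (∑ q, πx q * p.1 q) + (∑ q, πy q * p.2 q)
  map_add' a b := by
    simp only [Prod.fst_add, Prod.snd_add, Pi.add_apply, mul_add, Finset.sum_add_distrib]
    ring
  map_smul' c p := by
    simp only [Prod.smul_fst, Prod.smul_snd, Pi.smul_apply, smul_eq_mul, RingHom.id_apply,
      mul_add, Finset.mul_sum]
    congr 1 <;> exact Finset.sum_congr rfl fun q _ => by ring

/-- Setting one `y` coordinate of a feasible point to `0` keeps it feasible. -/
theorem flip_feasible [Fintype V] (G : SimpleGraph V) (C : Set V) {m : ℕ}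
    [DecidableEq (V × Fin m)] {p : Pt V m}
    (hp : p ∈ Feasible G C m) (w : V × Fin m) :
    (p.1, Function.update p.2 w 0) ∈ Feasible G C m := by
  classical
  obtain ⟨h1, h2, h3, h4, h5, h6, h7⟩ := hp
  have hle : ∀ q, Function.update p.2 w 0 q ≤ p.2 q := by
    intro q
    rcases eq_or_ne q w with rfl | h
    · simp only [Function.update_self]
      rcases h2 q with h | h <;> simp [h]
    · simp [Function.update_of_ne h]
  refine ⟨h1, ?_, ?_, ?_, ?_, ?_, h7⟩
  · intro q
    rcases eq_or_ne q w with rfl | h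
    · simp
    · simpa [Function.update_of_ne h] using h2 q
  · intro i
    exact le_trans (Finset.sum_le_sum fun u _ => hle (u, i)) (h3 i)
  · intro u
    exact le_trans (Finset.sum_le_sum fun i _ => hle (u, i)) (h4 u)
  · intro u i h
    exact le_trans (hle _) (h5 u i h)
  · intro u i
    exact le_trans (add_le_add_right (Finset.sum_le_sum fun x _ => hle (x, i)) _) (h6 u i)

/-- If `π^x·x + π^y·y ≤ π₀` is facet-defining for `P` and the facet it
defines is different from the face `{(x,y) ∈ P : y_{v,j} = 0}`, then `π^y_{v,j} ≥ 0`. -/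
theorem facet_coeff_nonneg [Fintype V] (G : SimpleGraph V) (C : Set V)
    (hconn : G.Connected) (hcard : 3 ≤ Fintype.card V)
    (hiso : ∀ w : V, w ∉ C → ∃ z, G.Adj w z)
    (htf : TwinFree G C)
    (m : ℕ) (hm : m = Fintype.card V - gdelta G C + 1)
    (πx πy : V × Fin m → ℝ) (π0 : ℝ)
    (hfacet : IsFacet G C m (fun p => (∑ q, πx q * p.1 q) + (∑ q, πy q * p.2 q)) π0)
    (v : V) (j : Fin m)
    (hdiff : {p ∈ poly G C m | (∑ q, πx q * p.1 q) + (∑ q, πy q * p.2 q) = π0} ≠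
      {p ∈ poly G C m | p.2 (v, j) = 0}) :
    0 ≤ πy (v, j) := by
  classical
  set L : Pt V m →ₗ[ℝ] ℝ := lfun m πx πy with hL
  have hLapp : ∀ p : Pt V m, L p = (∑ q, πx q * p.1 q) + (∑ q, πy q * p.2 q) := fun _ => rfl
  set F : Set (Pt V m) :=
    {p ∈ poly G C m | (∑ q, πx q * p.1 q) + (∑ q, πy q * p.2 q) = π0} with hF
  have hm1 : 0 < m := lt_of_le_of_lt (Nat.zero_le _) j.2
  have hnm : 1 ≤ Fintype.card V * m := Nat.mul_pos (lt_of_lt_of_le (by norm_num) hcard) hm1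
  have hdim : Module.finrank ℝ ((affineSpan ℝ F).direction) = 2 * Fintype.card V * m - 1 :=
    hfacet.2
  rw [mul_assoc] at hdim
  -- F is nonempty
  have hFne : F.Nonempty := by
    by_contra hne
    rw [Set.not_nonempty_iff_eq_empty] at hne
    rw [hne] at hdim
    rw [AffineSubspace.span_empty, AffineSubspace.direction_bot, finrank_bot] at hdim
    omega
  by_cases hz : ∀ p ∈ F, p.2 (v, j) = 0
  · -- then F equals the face `{y_{v,j} = 0}`, contradiction
    exfalso
    apply hdiff
    set g : Pt V m →ₗ[ℝ] ℝ :=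
      (LinearMap.proj (v, j)).comp (LinearMap.snd ℝ (V × Fin m → ℝ) (V × Fin m → ℝ)) with hg
    have hgapp : ∀ p : Pt V m, g p = p.2 (v, j) := fun _ => rfl
    have haff : affineSpan ℝ F ≤ (LinearMap.ker g).toAffineSubspace := by
      rw [affineSpan_le]
      intro p hp
      rw [SetLike.mem_coe, Submodule.mem_toAffineSubspace, LinearMap.mem_ker, hgapp]
      exact hz p hp
    have hdirle : (affineSpan ℝ F).direction ≤ LinearMap.ker g := by
      have := AffineSubspace.direction_le haff
      rwa [Submodule.toAffineSubspace_direction] at this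
    have hker_ne_top : LinearMap.ker g ≠ ⊤ := by
      intro htop
      have hmem : ((0 : V × Fin m → ℝ), Pi.single (v, j) (1 : ℝ)) ∈ LinearMap.ker g :=
        htop ▸ Submodule.mem_top
      rw [LinearMap.mem_ker, hgapp] at hmem
      simp at hmem
    have htot : Module.finrank ℝ (Pt V m) = 2 * Fintype.card V * m := by
      rw [Module.finrank_prod, Module.finrank_fintype_fun_eq_card, Fintype.card_prod,
        Fintype.card_fin]
      ring
    have hklt : Module.finrank ℝ (LinearMap.ker g) < 2 * (Fintype.card V * m) := by
      rw [← mul_assoc, ← htot]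
      exact Submodule.finrank_lt hker_ne_top
    have hdireq : (affineSpan ℝ F).direction = LinearMap.ker g :=
      Submodule.eq_of_le_of_finrank_le hdirle (by rw [hdim]; exact Nat.le_pred_of_lt hklt)
    obtain ⟨p0, hp0⟩ := hFne
    have hspan_eq : affineSpan ℝ F = (LinearMap.ker g).toAffineSubspace := by
      apply AffineSubspace.ext_of_direction_eq
      · rw [hdireq, Submodule.toAffineSubspace_direction]
      · refine ⟨p0, subset_affineSpan ℝ F hp0, ?_⟩
        rw [SetLike.mem_coe, Submodule.mem_toAffineSubspace, LinearMap.mem_ker, hgapp]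
        exact hz p0 hp0
    -- the affine span of F is contained in the hyperplane {L = π0}
    set K : AffineSubspace ℝ (Pt V m) :=
      AffineSubspace.comap L.toAffineMap (AffineSubspace.mk' π0 (⊥ : Submodule ℝ ℝ)) with hK
    have hFK : affineSpan ℝ F ≤ K := by
      rw [affineSpan_le]
      intro p hp
      rw [SetLike.mem_coe, hK, AffineSubspace.mem_comap, AffineSubspace.mem_mk']
      have : L.toAffineMap p = π0 := hp.2
      simp [this]
    ext p
    constructor
    · rintro ⟨hp, hfp⟩
      exact ⟨hp, hz p ⟨hp, hfp⟩⟩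
    · rintro ⟨hp, hyp⟩
      refine ⟨hp, ?_⟩
      have hmem : p ∈ affineSpan ℝ F := by
        rw [hspan_eq, Submodule.mem_toAffineSubspace, LinearMap.mem_ker, hgapp]
        exact hyp
      have hmem2 := hFK hmem
      rw [hK] at hmem2
      have h2 : L.toAffineMap p = π0 := by
        simpa [AffineSubspace.mem_comap, AffineSubspace.mem_mk',
          vsub_eq_sub, sub_eq_zero] using hmem2
      rw [← hLapp p]
      simpa using h2
  · -- there is a point of F with y_{v,j} ≠ 0
    push_neg at hz
    obtain ⟨p, hpF, hpy⟩ := hz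
    obtain ⟨hppoly, hpf⟩ := hpF
    rw [poly, _root_.convexHull_eq] at hppoly
    obtain ⟨ι, t, w, z, hw0, hw1, hzs, hcm⟩ := hppoly
    have hsum : ∑ i ∈ t, w i • z i = p := by
      rw [← Finset.centerMass_eq_of_sum_1 t z hw1]
      exact hcm
    -- identify the y-coordinate and the value of L as convex combinations
    set g : Pt V m →ₗ[ℝ] ℝ :=
      (LinearMap.proj (v, j)).comp (LinearMap.snd ℝ (V × Fin m → ℝ) (V × Fin m → ℝ)) with hg
    have hgapp : ∀ p : Pt V m, g p = p.2 (v, j) := fun _ => rfl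
    have hgy : ∑ i ∈ t, w i * (z i).2 (v, j) = p.2 (v, j) := by
      rw [← hgapp p, ← hsum, map_sum]
      exact Finset.sum_congr rfl fun i _ => by rw [map_smul, smul_eq_mul, hgapp]
    have hLp : ∑ i ∈ t, w i * L (z i) = π0 := by
      rw [← hpf, ← hLapp p, ← hsum, map_sum]
      exact Finset.sum_congr rfl fun i _ => by rw [map_smul, smul_eq_mul]
    -- find an atom with positive weight and y_{v,j} = 1
    have hne : ∑ i ∈ t, w i * (z i).2 (v, j) ≠ 0 := by rw [hgy]; exact hpy
    obtain ⟨i0, hi0t, hi0⟩ := Finset.exists_ne_zero_of_sum_ne_zero hne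
    have hwi0 : w i0 ≠ 0 := fun h => hi0 (by rw [h, zero_mul])
    have hzfeas : z i0 ∈ Feasible G C m := hzs i0 hi0t
    have hzy1 : (z i0).2 (v, j) = 1 := by
      rcases hzfeas.2.1 (v, j) with h | h
      · exact absurd (by rw [h, mul_zero]) hi0
      · exact h
    -- the atom lies on the facet
    have hval : ∀ i ∈ t, L (z i) ≤ π0 := by
      intro i hi
      have : z i ∈ poly G C m := subset_convexHull ℝ _ (hzs i hi)
      have := hfacet.1 (z i) this
      rwa [hLapp]
    have hzero : ∑ i ∈ t, w i * (π0 - L (z i)) = 0 := by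
      simp only [mul_sub]
      rw [Finset.sum_sub_distrib, ← Finset.sum_mul, hw1, one_mul, hLp, sub_self]
    have hall := (Finset.sum_eq_zero_iff_of_nonneg fun i hi =>
      mul_nonneg (hw0 i hi) (sub_nonneg.mpr (hval i hi))).mp hzero
    have hLz : L (z i0) = π0 := by
      have := hall i0 hi0t
      rcases mul_eq_zero.mp this with h | h
      · exact absurd h hwi0
      · linarith
    -- flip the coordinate to zero
    set q : Pt V m := z i0 with hq
    set q' : Pt V m := (q.1, Function.update q.2 (v, j) 0) with hq'
    have hq'feas : q' ∈ Feasible G C m := flip_feasible G C hzfeas (v, j)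
    have hq'le : L q' ≤ π0 := by
      have := hfacet.1 q' (subset_convexHull ℝ _ hq'feas)
      rwa [hLapp]
    have hkey : ∑ q0, πy q0 * Function.update q.2 (v, j) 0 q0
        = (∑ q0, πy q0 * q.2 q0) - πy (v, j) * q.2 (v, j) := by
      rw [Finset.sum_eq_sum_sdiff_singleton_add (Finset.mem_univ (v, j))
          (fun q0 => πy q0 * Function.update q.2 (v, j) 0 q0),
        Finset.sum_eq_sum_sdiff_singleton_add (Finset.mem_univ (v, j))
          (fun q0 => πy q0 * q.2 q0)]
      have hcongr : ∑ q0 ∈ Finset.univ \ {(v, j)}, πy q0 * Function.update q.2 (v, j) 0 q0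
          = ∑ q0 ∈ Finset.univ \ {(v, j)}, πy q0 * q.2 q0 := by
        refine Finset.sum_congr rfl fun q0 hq0 => ?_
        have : q0 ≠ (v, j) := by
          simp only [Finset.mem_sdiff, Finset.mem_singleton] at hq0
          exact hq0.2
        rw [Function.update_of_ne this]
      rw [hcongr, Function.update_self]
      ring
    have hdval : L q - L q' = πy (v, j) := by
      rw [hLapp, hLapp]
      simp only [hq']
      rw [hkey, hzy1]
      ring
    have : πy (v, j) = π0 - L q' := by rw [← hdval, hLz]
    linarith

end LegalSeq
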